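/- Let F be an algebraically closed field of characteristic zero and let t ∈ F be an element with t - 1 not an integer (i.e., t - 1 is not in the image of ℤ in F). Then there is no rational function r ∈ F(x) satisfying x·r' + (t - 1 - x)·r = x, where r' denotes the derivative of r with respect to x. -/

import Mathlib

/-- Over an algebraically closed field `F` of characteristic zero, if `t - 1` is not an
integer, then no rational function `r ∈ F(x)` satisfies `x·r' + (t-1-x)·r = x`. -/
theorem no_rational_solution_incomplete_gamma_ode
    (F : Type*) [Field F] [IsAlgClosed F] [CharZero F]
    (δ : Derivation F (RatFunc F) (RatFunc F)) (hδ : δ RatFunc.X = 1)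
    (t : F) (ht : ∀ m : ℤ, (m : F) ≠ t - 1) :
    ¬ ∃ r : RatFunc F,
      RatFunc.X * δ r + (RatFunc.C (t - 1) - RatFunc.X) * r = RatFunc.X := by
  classical
  rintro ⟨r, hr⟩
  set s := t - 1 with hsdef
  have hAinj : Function.Injective (algebraMap (Polynomial F) (RatFunc F)) :=
    RatFunc.algebraMap_injective F
  -- the derivation computes the usual derivative on polynomials
  have halg : (IsScalarTower.toAlgHom F (Polynomial F) (RatFunc F)) =
      Polynomial.aeval RatFunc.X := by
    apply Polynomial.algHom_ext
    simp [RatFunc.algebraMap_X]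
  have hAae : ∀ g : Polynomial F,
      algebraMap (Polynomial F) (RatFunc F) g = Polynomial.aeval RatFunc.X g := fun g =>
    DFunLike.congr_fun halg g
  have hA : ∀ f : Polynomial F, δ (algebraMap (Polynomial F) (RatFunc F) f)
      = algebraMap (Polynomial F) (RatFunc F) (Polynomial.derivative f) := by
    intro f
    rw [hAae, Derivation.comp_aeval_eq, hδ, smul_eq_mul, mul_one, hAae]
  set p := r.num with hpdef
  set q := r.denom with hqdef
  have hq0 : q ≠ 0 := r.denom_ne_zero
  have hAq0 : algebraMap (Polynomial F) (RatFunc F) q ≠ 0 := fun h =>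
    hq0 (hAinj (by simpa using h))
  have hp : algebraMap (Polynomial F) (RatFunc F) p
      = r * algebraMap (Polynomial F) (RatFunc F) q :=
    (div_eq_iff hAq0).mp (RatFunc.num_div_denom r)
  have hD : algebraMap (Polynomial F) (RatFunc F) (Polynomial.derivative p)
      = r * algebraMap (Polynomial F) (RatFunc F) (Polynomial.derivative q)
        + algebraMap (Polynomial F) (RatFunc F) q * δ r := by
    have h2 := congrArg δ hp
    rwa [hA, Derivation.leibniz, hA, smul_eq_mul, smul_eq_mul] at h2
  have key : algebraMap (Polynomial F) (RatFunc F)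
      (Polynomial.X * (Polynomial.derivative p * q - p * Polynomial.derivative q)
        + (Polynomial.C s - Polynomial.X) * (p * q))
      = algebraMap (Polynomial F) (RatFunc F) (Polynomial.X * q ^ 2) := by
    simp only [map_add, map_mul, map_sub, map_pow, RatFunc.algebraMap_X, RatFunc.algebraMap_C]
    linear_combination (algebraMap (Polynomial F) (RatFunc F) q) ^ 2 * hr
      + (RatFunc.X * algebraMap (Polynomial F) (RatFunc F) q) * hD
      + (-(RatFunc.X * algebraMap (Polynomial F) (RatFunc F) (Polynomial.derivative q))
          + (RatFunc.C s - RatFunc.X) * algebraMap (Polynomial F) (RatFunc F) q) * hp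
  have star : Polynomial.X * (Polynomial.derivative p * q - p * Polynomial.derivative q)
      + (Polynomial.C s - Polynomial.X) * (p * q) = Polynomial.X * q ^ 2 := hAinj key
  have hcop : IsCoprime p q := RatFunc.isCoprime_num_denom r
  have hdvd : q ∣ (Polynomial.X * Polynomial.derivative q) * p :=
    ⟨Polynomial.X * Polynomial.derivative p + (Polynomial.C s - Polynomial.X) * p
      - Polynomial.X * q, by linear_combination -star⟩
  have hqd : q ∣ Polynomial.X * Polynomial.derivative q :=
    hcop.symm.dvd_of_dvd_mul_right hdvd
  set n := q.natDegree with hndef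
  -- first show q = X ^ n
  have hqX : q = Polynomial.X ^ n := by
    rcases Nat.eq_zero_or_pos n with hn | hn
    · rw [hn, pow_zero]
      exact (r.monic_denom.natDegree_eq_zero).mp hn
    · obtain ⟨u, hu⟩ := hqd
      have hq'0 : Polynomial.derivative q ≠ 0 := by
        intro h
        have h5 := Polynomial.natDegree_eq_zero_of_derivative_eq_zero h
        rw [hndef] at hn
        omega
      have hu0 : u ≠ 0 := by
        rintro rfl
        rw [mul_zero] at hu
        rcases mul_eq_zero.mp hu with h | h
        · exact Polynomial.X_ne_zero h
        · exact hq'0 h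
      have hdegu : u.natDegree = 0 := by
        have h4 : (Polynomial.X * Polynomial.derivative q).natDegree = (q * u).natDegree := by
          rw [hu]
        have h1 : (Polynomial.X * Polynomial.derivative q).natDegree =
            1 + (Polynomial.derivative q).natDegree := by
          rw [Polynomial.natDegree_mul Polynomial.X_ne_zero hq'0, Polynomial.natDegree_X]
        have h2 : (q * u).natDegree = n + u.natDegree :=
          Polynomial.natDegree_mul hq0 hu0
        have h3 := Polynomial.natDegree_derivative_le q
        rw [← hndef] at h3
        omega
      have hc := Polynomial.eq_C_of_natDegree_eq_zero hdegu
      set c := u.coeff 0 with hcdef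
      rw [hc] at hu
      have hcoeff : ∀ k : ℕ, (k : F) * q.coeff k = c * q.coeff k := by
        intro k
        have h := congrArg (fun f => Polynomial.coeff f k) hu
        simp only [Polynomial.coeff_mul_C] at h
        match k with
        | 0 =>
          have h0 : q.coeff 0 * c = 0 := by simpa using h.symm
          simp only [Nat.cast_zero, zero_mul]
          linear_combination -h0
        | Nat.succ j =>
          rw [Polynomial.coeff_X_mul, Polynomial.coeff_derivative] at h
          push_cast at h ⊢
          linear_combination h
      have hcn : c = (n : F) := by
        have hk := hcoeff n
        have hmon : q.coeff n = 1 := r.monic_denom.coeff_natDegree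
        rw [hmon, mul_one, mul_one] at hk
        exact hk.symm
      ext k
      rw [Polynomial.coeff_X_pow]
      by_cases hk : k = n
      · subst hk
        rw [if_pos rfl]
        exact r.monic_denom.coeff_natDegree
      · simp only [hk, if_false]
        have h := hcoeff k
        rw [hcn] at h
        have hne : (k : F) ≠ (n : F) := fun h' => hk (Nat.cast_injective h')
        have hz : ((k : F) - (n : F)) * q.coeff k = 0 := by linear_combination h
        rcases mul_eq_zero.mp hz with h' | h'
        · exact absurd (sub_eq_zero.mp h') hne
        · exact h'
  -- case split on n
  rcases Nat.eq_zero_or_pos n with hn | hn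
  · -- q = 1 : polynomial solution, degree argument
    have hq1 : q = 1 := (r.monic_denom.natDegree_eq_zero).mp hn
    rw [hq1] at star
    simp only [Polynomial.derivative_one, mul_zero, mul_one, sub_zero, one_pow] at star
    -- star : X * derivative p + (C s - X) * p = X
    have hp0 : p ≠ 0 := by
      intro h
      rw [h] at star
      simp only [Polynomial.derivative_zero, mul_zero, zero_add, zero_mul] at star
      exact Polynomial.X_ne_zero star.symm
    set d := p.natDegree with hddef
    rcases Nat.eq_zero_or_pos d with hd | hd
    · have hpc := Polynomial.eq_C_of_natDegree_eq_zero hd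
      rw [hpc] at star
      simp only [Polynomial.derivative_C, mul_zero, zero_add] at star
      have h1 := congrArg (fun f => Polynomial.coeff f 1) star
      have h0 := congrArg (fun f => Polynomial.coeff f 0) star
      simp only [Polynomial.coeff_mul_C, Polynomial.coeff_sub, Polynomial.coeff_C,
        Polynomial.coeff_X_zero, Polynomial.coeff_X_one] at h1 h0
      norm_num at h1 h0
      rcases h0 with h | h
      · exact ht 0 (by rw [Int.cast_zero, h])
      · rw [h] at h1
        norm_num at h1
    · have h := congrArg (fun f => Polynomial.coeff f (d + 1)) star
      simp only [Polynomial.coeff_add, Polynomial.coeff_X_mul, Polynomial.coeff_derivative,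
        sub_mul, Polynomial.coeff_sub, Polynomial.coeff_C_mul] at h
      have hpd1 : p.coeff (d + 1) = 0 :=
        Polynomial.coeff_eq_zero_of_natDegree_lt (by omega)
      have hXd1 : (Polynomial.X : Polynomial F).coeff (d + 1) = 0 := by
        rw [Polynomial.coeff_X]
        simp only [ite_eq_right_iff]
        intro hcontra
        omega
      rw [hpd1, hXd1] at h
      have hpd : p.coeff d = 0 := by linear_combination -h
      have hl : p.leadingCoeff = 0 := hpd
      exact Polynomial.leadingCoeff_ne_zero.mpr hp0 hl
  · -- n ≥ 1 : pole at zero forces X ∣ p, contradiction with coprimality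
    obtain ⟨m, hm⟩ : ∃ m, n = m + 1 := ⟨n - 1, by omega⟩
    rw [hqX, hm] at star
    rw [Polynomial.derivative_X_pow] at star
    have hXpow : (Polynomial.X : Polynomial F) ^ (m + 1) ≠ 0 :=
      pow_ne_zero _ Polynomial.X_ne_zero
    have eq2 : Polynomial.X * Polynomial.derivative p
        + (Polynomial.C s - Polynomial.C ((m + 1 : ℕ) : F) - Polynomial.X) * p
        = Polynomial.X ^ (m + 2) := by
      apply mul_left_cancel₀ hXpow
      have hms : (m + 1 : ℕ) - 1 = m := by omega
      rw [hms] at star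
      linear_combination star
    have heval := congrArg (Polynomial.eval 0) eq2
    simp only [Polynomial.eval_add, Polynomial.eval_mul, Polynomial.eval_sub,
      Polynomial.eval_pow, Polynomial.eval_X, Polynomial.eval_C, zero_mul, zero_add,
      sub_zero] at heval
    rw [zero_pow (by omega : m + 2 ≠ 0)] at heval
    -- heval : (s - (m+1)) * eval 0 p = 0
    have hne : s - ((m + 1 : ℕ) : F) ≠ 0 := by
      intro h
      apply ht ((m : ℤ) + 1)
      push_cast
      push_cast at h
      linear_combination -h
    have hp00 : Polynomial.eval 0 p = 0 := by
      rcases mul_eq_zero.mp heval with h | h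
      · exact absurd h hne
      · exact h
    have hXp : Polynomial.X ∣ p := by
      rw [Polynomial.X_dvd_iff, Polynomial.coeff_zero_eq_eval_zero]
      exact hp00
    have hXq : Polynomial.X ∣ q := by
      rw [hqX, hm]
      exact dvd_pow_self _ (by omega)
    exact Polynomial.not_isUnit_X (hcop.isUnit_of_dvd' hXp hXq)
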